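/- Let X be a metric space, let φ be a lower semicontinuous submeasure on ℕ such that I_φ is an ideal on ℕ, and let x = (x_n) be a sequence in X. Then the set Λ_x(I_φ) of I_φ-limit points of x is an F_σ subset of X (it equals the countable union of the closed sets Λ_x(I_φ, q) over positive rational q). -/

import Mathlib

open Filter Topology MeasureTheory Set

noncomputable section

/-- A lower semicontinuous submeasure on `ℕ`:  `φ : P(ℕ) → [0,∞]` with `φ(∅) = 0`,
`φ({n}) < ∞`, monotone, subadditive, and `φ(A) = lim_n φ(A ∩ {0,…,n-1})`. -/
structure LSCSubmeasure where
  toFun : Set ℕ → ENNReal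
  empty' : toFun ∅ = 0
  singleton_lt_top' : ∀ n : ℕ, toFun {n} < ⊤
  mono' : ∀ ⦃A B : Set ℕ⦄, A ⊆ B → toFun A ≤ toFun B
  subadd' : ∀ A B : Set ℕ, toFun (A ∪ B) ≤ toFun A + toFun B
  lsc' : ∀ A : Set ℕ, Tendsto (fun n => toFun (A ∩ {m | m < n})) atTop (𝓝 (toFun A))

/-- `‖A‖_φ := lim_n φ(A \ {0,…,n-1})`; since the sequence is antitone, the limit
is the infimum. -/
def LSCSubmeasure.norm (φ : LSCSubmeasure) (A : Set ℕ) : ENNReal :=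
  ⨅ n : ℕ, φ.toFun (A \ {m | m < n})

/-- The (analytic P-)ideal `I_φ = {A : ‖A‖_φ = 0}` associated with `φ`. -/
def LSCSubmeasure.ideal (φ : LSCSubmeasure) : Set (Set ℕ) :=
  {A | φ.norm A = 0}

/-- `I` is an ideal on `ℕ`: closed under finite unions and subsets, contains all
finite sets, and is proper. -/
def IsIdealOnNat (I : Set (Set ℕ)) : Prop :=
  (∀ A B : Set ℕ, A ∈ I → B ∈ I → A ∪ B ∈ I) ∧
  (∀ A B : Set ℕ, A ⊆ B → B ∈ I → A ∈ I) ∧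
  (∀ A : Set ℕ, A.Finite → A ∈ I) ∧
  (Set.univ : Set ℕ) ∉ I

/-- Convergence of the subsequence `(x_n : n ∈ A)` to `l`. -/
def ConvergesAlong {X : Type*} [TopologicalSpace X] (x : ℕ → X) (A : Set ℕ) (l : X) : Prop :=
  Tendsto x (atTop ⊓ 𝓟 A) (𝓝 l)

/-- `Λ_x(I)`: the set of `I`-limit points of the sequence `x`. -/
def idealLimitPoints {X : Type*} [TopologicalSpace X] (I : Set (Set ℕ)) (x : ℕ → X) : Set X :=
  {l | ∃ A : Set ℕ, A ∉ I ∧ ConvergesAlong x A l}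

/-- `Γ_x(I)`: the set of `I`-cluster points of the sequence `x`. -/
def idealClusterPoints {X : Type*} [TopologicalSpace X] (I : Set (Set ℕ)) (x : ℕ → X) : Set X :=
  {l | ∀ U ∈ 𝓝 l, {n | x n ∈ U} ∉ I}

/-- `Λ_x(I_φ, q)`: the set of `ℓ` such that some subsequence `(x_n : n ∈ A)` with
`‖A‖_φ ≥ q` converges to `ℓ`. -/
def LambdaQ {X : Type*} [TopologicalSpace X] (φ : LSCSubmeasure) (x : ℕ → X) (q : ℝ) : Set X :=
  {l | ∃ A : Set ℕ, ENNReal.ofReal q ≤ φ.norm A ∧ ConvergesAlong x A l}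

/-- The summable ideal `I_f = {S : ∑_{n ∈ S} f(n) < ∞}`. -/
def summableIdeal (f : ℕ → ℝ) : Set (Set ℕ) := {S | Summable (S.indicator f)}

/-- `A` has asymptotic density `d`. -/
def HasDensity (A : Set ℕ) (d : ℝ) : Prop :=
  Tendsto (fun n => (∑ i ∈ Finset.range n, A.indicator (fun _ => (1 : ℝ)) i) / (n : ℝ))
    atTop (𝓝 d)

/-- `A_B := {a_b : b ∈ B}`, where `a_0 < a_1 < ⋯` is the increasing enumeration of `A`. -/
def sel (A B : Set ℕ) : Set ℕ := (fun b => Nat.nth (· ∈ A) b) '' B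

/-- `A ≤ B`: the increasing enumerations satisfy `a_n ≤ b_n` for all `n`. -/
def enumLE (A B : Set ℕ) : Prop := ∀ n : ℕ, Nat.nth (· ∈ A) n ≤ Nat.nth (· ∈ B) n

/-- `I` is weakly thinnable: `A_B ∉ I` whenever `A` has non-zero asymptotic density
and `B ∉ I`. -/
def WeaklyThinnable (I : Set (Set ℕ)) : Prop :=
  ∀ A B : Set ℕ, (∃ d : ℝ, 0 < d ∧ HasDensity A d) → B ∉ I → sel A B ∉ I

/-- `I` is thinnable: weakly thinnable, and moreover `B_A ∉ I` under the same
hypotheses, and `X ∉ I` whenever `X ≤ Y` and `Y ∉ I`. -/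
def Thinnable (I : Set (Set ℕ)) : Prop :=
  WeaklyThinnable I ∧
  (∀ A B : Set ℕ, (∃ d : ℝ, 0 < d ∧ HasDensity A d) → B ∉ I → sel B A ∉ I) ∧
  (∀ X Y : Set ℕ, enumLE X Y → Y ∉ I → X ∉ I)

/-- The analytic P-ideal `I_φ` is strongly thinnable. -/
def StronglyThinnable (φ : LSCSubmeasure) : Prop :=
  WeaklyThinnable φ.ideal ∧
  (∀ q : ℝ, 0 < q → ∀ A : Set ℕ, ∀ a : ℝ, 0 < a → HasDensity A a →
    ∃ c : ℝ, 0 < c ∧ ∀ B : Set ℕ, ENNReal.ofReal q ≤ φ.norm B →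
      ENNReal.ofReal (c * q) ≤ φ.norm (sel B A)) ∧
  (∃ c : ℝ, 0 < c ∧ ∀ X Y : Set ℕ, enumLE X Y →
    ENNReal.ofReal c * φ.norm Y ≤ φ.norm X)

/-- The `i`-th digit (0-indexed, so this is `d_{i+1}(ω)`) of the non-terminating
dyadic expansion of `ω ∈ (0,1]`. -/
def dyadicDigit (ω : ℝ) (i : ℕ) : ℕ :=
  (⌈(2 : ℝ) ^ (i + 1) * ω⌉ - 2 * ⌈(2 : ℝ) ^ i * ω⌉ + 1).toNat

/-- `x↾ω`: the subsequence of `x` indexed by the set `{i : d_i(ω) = 1}`. -/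
def subseq {X : Type*} (x : ℕ → X) (ω : ℝ) : ℕ → X :=
  fun k => x (Nat.nth (fun i => dyadicDigit ω i = 1) k)

/-- The Erdős–Ulam ideal `E_f` associated with a weight `f`. -/
def ErdosUlamIdeal (f : ℕ → ℝ) : Set (Set ℕ) :=
  {S | Tendsto (fun n => (∑ i ∈ Finset.Icc 1 n, S.indicator f i) /
        (∑ i ∈ Finset.Icc 1 n, f i)) atTop (𝓝 0)}

/-- The upper `α`-density `d_α^⋆(S)`. -/
def upperAlphaDensity (α : ℝ) (S : Set ℕ) : ℝ :=
  limsup (fun n => (∑ i ∈ Finset.Icc 1 n, S.indicator (fun i => (i : ℝ) ^ α) i) /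
    (∑ i ∈ Finset.Icc 1 n, (i : ℝ) ^ α)) atTop

/-- `S` has `α`-asymptotic density `d`. -/
def HasAlphaDensity (α : ℝ) (S : Set ℕ) (d : ℝ) : Prop :=
  Tendsto (fun n => (∑ i ∈ Finset.Icc 1 n, S.indicator (fun i => (i : ℝ) ^ α) i) /
    (∑ i ∈ Finset.Icc 1 n, (i : ℝ) ^ α)) atTop (𝓝 d)

/-- The ideal `I_α` of sets of zero upper `α`-density. -/
def Ialpha (α : ℝ) : Set (Set ℕ) := {S | upperAlphaDensity α S = 0}


private lemma exists_seq_rec {P : ℕ → ℕ → ℕ → Prop} (h : ∀ k N, ∃ M, P k N M) (a : ℕ) :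
    ∃ n : ℕ → ℕ, n 0 = a ∧ ∀ k, P k (n k) (n (k + 1)) := by
  choose f hf using h
  exact ⟨fun k => Nat.rec a (fun k ih => f k ih) k, rfl, fun k => hf k _⟩

private lemma lambdaQ_closed {X : Type*} [MetricSpace X] (φ : LSCSubmeasure)
    (x : ℕ → X) (q : ℝ) : IsClosed (LambdaQ φ x q) := by
  apply isClosed_of_closure_subset
  intro l hl
  have h1 : ∀ k : ℕ, ∃ A : Set ℕ, ∃ y : X, dist l y < (1/2 : ℝ) ^ k ∧
      ENNReal.ofReal q ≤ φ.norm A ∧ ConvergesAlong x A y := by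
    intro k
    obtain ⟨y, hy, hd⟩ := Metric.mem_closure_iff.mp hl ((1/2 : ℝ) ^ k) (by positivity)
    obtain ⟨A, hA1, hA2⟩ := hy
    exact ⟨A, y, hd, hA1, hA2⟩
  choose A y hdist hnorm hconv using h1
  have h2 : ∀ k : ℕ, ∃ N : ℕ, ∀ m ≥ N, m ∈ A k → dist (x m) (y k) < (1/2 : ℝ) ^ k := by
    intro k
    have h := Metric.tendsto_nhds.mp (hconv k) ((1/2 : ℝ) ^ k) (by positivity)
    rw [eventually_inf_principal] at h
    exact eventually_atTop.mp (h.mono fun m hm hmA => hm hmA)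
  choose Nb hNb using h2
  have key : ∀ k N : ℕ, ∃ M : ℕ, (N < M ∧ Nb (k + 1) ≤ M) ∧
      ENNReal.ofReal (q - (1/2 : ℝ) ^ k) ≤ φ.toFun (A k ∩ Set.Ico N M) := by
    intro k N
    by_cases hq : q - (1/2 : ℝ) ^ k ≤ 0
    · refine ⟨max (N + 1) (Nb (k + 1)), ⟨?_, le_max_right _ _⟩, ?_⟩
      · exact lt_of_lt_of_le (Nat.lt_succ_self N) (le_max_left _ _)
      · rw [ENNReal.ofReal_eq_zero.mpr hq]
        exact zero_le
    push_neg at hq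
    set B : Set ℕ := A k \ {m | m < N} with hB
    have hBn : ENNReal.ofReal q ≤ φ.toFun B := (hnorm k).trans (iInf_le _ N)
    have hlt : ENNReal.ofReal (q - (1/2 : ℝ) ^ k) < φ.toFun B := by
      refine lt_of_lt_of_le ?_ hBn
      have hpow : (0:ℝ) < (1/2 : ℝ) ^ k := by positivity
      exact (ENNReal.ofReal_lt_ofReal_iff (by linarith)).mpr (by linarith)
    have hev : ∀ᶠ M in atTop,
        ENNReal.ofReal (q - (1/2 : ℝ) ^ k) < φ.toFun (B ∩ {m | m < M}) :=
      (φ.lsc' B).eventually (eventually_gt_nhds hlt)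
    obtain ⟨M, ⟨⟨hφM, hNM⟩, hNbM⟩⟩ :=
      ((hev.and (eventually_gt_atTop N)).and (eventually_ge_atTop (Nb (k + 1)))).exists
    refine ⟨M, ⟨hNM, hNbM⟩, ?_⟩
    have hset : B ∩ {m | m < M} = A k ∩ Set.Ico N M := by
      ext m
      simp only [hB, Set.mem_inter_iff, Set.mem_diff, Set.mem_setOf_eq, Set.mem_Ico, not_lt]
      tauto
    rw [← hset]
    exact hφM.le
  obtain ⟨n, hn0, hnP⟩ := exists_seq_rec key (Nb 0)
  have hmono : StrictMono n := strictMono_nat_of_lt_succ fun k => (hnP k).1.1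
  have hNbn : ∀ k, Nb k ≤ n k := by
    intro k
    cases k with
    | zero => exact hn0.ge
    | succ k => exact (hnP k).1.2
  have hφ : ∀ k, ENNReal.ofReal (q - (1/2 : ℝ) ^ k) ≤
      φ.toFun (A k ∩ Set.Ico (n k) (n (k + 1))) := fun k => (hnP k).2
  set S : Set ℕ := ⋃ k, A k ∩ Set.Ico (n k) (n (k + 1)) with hS
  have hnormS : ENNReal.ofReal q ≤ φ.norm S := by
    rw [LSCSubmeasure.norm]
    refine le_iInf fun N => ?_
    have ht : Tendsto (fun k : ℕ => ENNReal.ofReal (q - (1/2 : ℝ) ^ k)) atTop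
        (𝓝 (ENNReal.ofReal q)) := by
      have h0 : Tendsto (fun k : ℕ => q - (1/2 : ℝ) ^ k) atTop (𝓝 q) := by
        have := tendsto_pow_atTop_nhds_zero_of_lt_one
          (by norm_num : (0:ℝ) ≤ 1/2) (by norm_num : (1/2 : ℝ) < 1)
        simpa using tendsto_const_nhds.sub this
      exact (ENNReal.continuous_ofReal.tendsto q).comp h0
    refine le_of_tendsto ht ?_
    filter_upwards [eventually_ge_atTop N] with k hk
    refine le_trans (hφ k) (φ.mono' ?_)
    intro m hm
    refine ⟨Set.mem_iUnion.mpr ⟨k, hm⟩, ?_⟩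
    simp only [Set.mem_setOf_eq, not_lt]
    exact le_trans (le_trans hk (hmono.le_apply)) hm.2.1
  have hconvS : ConvergesAlong x S l := by
    rw [ConvergesAlong, Metric.tendsto_nhds]
    intro ε hε
    obtain ⟨K, hK⟩ : ∃ K : ℕ, 2 * (1/2 : ℝ) ^ K < ε := by
      obtain ⟨K, hK⟩ := exists_pow_lt_of_lt_one (by positivity : (0:ℝ) < ε / 2)
        (by norm_num : (1/2 : ℝ) < 1)
      exact ⟨K, by linarith⟩
    rw [eventually_inf_principal]
    filter_upwards [eventually_ge_atTop (n K)] with m hm hmS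
    obtain ⟨j, hj⟩ := Set.mem_iUnion.mp hmS
    have hjK : K ≤ j := by
      by_contra h
      push_neg at h
      exact absurd (lt_of_lt_of_le hj.2.2 (hmono.monotone (Nat.succ_le_of_lt h)))
        (not_lt.mpr hm)
    have hxm : dist (x m) (y j) < (1/2 : ℝ) ^ j :=
      hNb j m (le_trans (hNbn j) hj.2.1) hj.1
    have hyl : dist (y j) l < (1/2 : ℝ) ^ j := by
      rw [dist_comm]; exact hdist j
    calc dist (x m) l ≤ dist (x m) (y j) + dist (y j) l := dist_triangle _ _ _
      _ < (1/2 : ℝ) ^ j + (1/2 : ℝ) ^ j := add_lt_add hxm hyl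
      _ = 2 * (1/2 : ℝ) ^ j := by ring
      _ ≤ 2 * (1/2 : ℝ) ^ K := by
          have := pow_le_pow_of_le_one (by norm_num : (0:ℝ) ≤ 1/2)
            (by norm_num : (1/2 : ℝ) ≤ 1) hjK
          linarith
      _ < ε := hK
  exact ⟨S, hnormS, hconvS⟩

/-- The set of `I_φ`-limit points of a sequence in a metric space is an
`F_σ`-set: each `Λ_x(I_φ, q)` is closed for rational `q > 0`, `Λ_x(I_φ)` is the countable
union of these closed sets, and hence is a countable union of closed sets. -/
theorem stmt1 {X : Type*} [MetricSpace X] (φ : LSCSubmeasure)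
    (hI : IsIdealOnNat φ.ideal) (x : ℕ → X) :
    (∀ q : ℚ, 0 < q → IsClosed (LambdaQ φ x (q : ℝ))) ∧
    idealLimitPoints φ.ideal x = ⋃ q ∈ {q : ℚ | 0 < q}, LambdaQ φ x (q : ℝ) ∧
    ∃ F : ℕ → Set X, (∀ n, IsClosed (F n)) ∧ idealLimitPoints φ.ideal x = ⋃ n, F n := by
  have heq : idealLimitPoints φ.ideal x = ⋃ q ∈ {q : ℚ | 0 < q}, LambdaQ φ x (q : ℝ) := by
    ext l
    simp only [idealLimitPoints, Set.mem_setOf_eq, Set.mem_iUnion, LambdaQ]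
    constructor
    · rintro ⟨A, hA, hc⟩
      have hne : φ.norm A ≠ 0 := by
        simpa [LSCSubmeasure.ideal] using hA
      obtain ⟨r, hr0, hr⟩ : ∃ r : ℚ, 0 < r ∧ ENNReal.ofReal r ≤ φ.norm A := by
        rcases eq_or_ne (φ.norm A) ⊤ with h | h
        · exact ⟨1, one_pos, by simp [h]⟩
        · have hpos : 0 < (φ.norm A).toReal := ENNReal.toReal_pos hne h
          obtain ⟨r, hr1, hr2⟩ := exists_rat_btwn hpos
          refine ⟨r, by exact_mod_cast hr1, ?_⟩
          rw [← ENNReal.ofReal_toReal h]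
          exact ENNReal.ofReal_le_ofReal hr2.le
      exact ⟨r, hr0, A, hr, hc⟩
    · rintro ⟨r, hr0, A, hr, hc⟩
      refine ⟨A, ?_, hc⟩
      intro h
      have h0 : φ.norm A = 0 := h
      rw [h0] at hr
      have : (r : ℝ) ≤ 0 := ENNReal.ofReal_eq_zero.mp (le_antisymm hr zero_le)
      exact absurd this (not_le.mpr (by exact_mod_cast hr0))
  refine ⟨fun r hr => lambdaQ_closed φ x (r : ℝ), heq, ?_⟩
  obtain ⟨f, hf⟩ := exists_surjective_nat ℚ
  refine ⟨fun n => if 0 < f n then LambdaQ φ x ((f n : ℚ) : ℝ) else LambdaQ φ x ((1 : ℚ) : ℝ),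
    fun n => ?_, ?_⟩
  · dsimp only
    split <;> exact lambdaQ_closed φ x _
  · rw [heq]
    ext l
    simp only [Set.mem_iUnion, Set.mem_setOf_eq]
    constructor
    · rintro ⟨r, hr, hl⟩
      obtain ⟨m, rfl⟩ := hf r
      exact ⟨m, by rw [if_pos hr]; exact hl⟩
    · rintro ⟨m, hm⟩
      by_cases h : 0 < f m
      · refine ⟨f m, h, ?_⟩
        rwa [if_pos h] at hm
      · refine ⟨1, one_pos, ?_⟩
        rwa [if_neg h] at hm
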